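/- Let d ≥ r ≥ 1 be integers, let p_1, …, p_r be positive integers, and let v^{(i,j)} ∈ ℝ^d for i ∈ [r], j ∈ [p_i] be arbitrary vectors. Define f_V : ∏_{i=1}^r Δ_{p_i} → ℝ by f_V(x) = det(W(x)ᵀ W(x))^{1/2}, where W(x) ∈ ℝ^{d×r} is the matrix whose i-th column is Σ_{j=1}^{p_i} x^i_j v^{(i,j)}. Then the maximum of f_V over ∏_{i=1}^r Δ_{p_i} is attained at a vertex: there exist indices j_1 ∈ [p_1], …, j_r ∈ [p_r] such that f_V(e_{j_1}, …, e_{j_r}) = max { f_V(x) : x ∈ ∏_{i=1}^r Δ_{p_i} }, where e_j denotes the j-th standard basis vector. -/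

import Mathlib

open Matrix

noncomputable section

/-- The volume function `f_V(x) = det(W(x)ᵀ W(x))^{1/2}`, where the `i`-th column of
`W(x) ∈ ℝ^{d×r}` is `∑_j x^i_j v^{(i,j)}`. -/
def volFn {d r : ℕ} (p : Fin r → ℕ) (v : ∀ i : Fin r, Fin (p i) → (Fin d → ℝ))
    (x : ∀ i : Fin r, Fin (p i) → ℝ) : ℝ :=
  Real.sqrt (Matrix.det
    ((Matrix.of fun (a : Fin d) (i : Fin r) => ∑ j, x i j * v i j a)ᵀ *
      Matrix.of fun (a : Fin d) (i : Fin r) => ∑ j, x i j * v i j a))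

namespace VolAux

lemma psd_det_nonneg {n : Type*} [Fintype n] [DecidableEq n] {M : Matrix n n ℝ}
    (h : M.PosSemidef) : 0 ≤ M.det := by
  rw [h.isHermitian.det_eq_prod_eigenvalues]
  exact Finset.prod_nonneg fun i _ => h.eigenvalues_nonneg i

lemma gram_det_nonneg {m n : Type*} [Fintype m] [Fintype n] [DecidableEq n]
    (A : Matrix m n ℝ) : 0 ≤ (Aᵀ * A).det := by
  apply psd_det_nonneg
  have := Matrix.posSemidef_conjTranspose_mul_self A
  rwa [conjTranspose_eq_transpose_of_trivial] at this

lemma updateRow_mul' {m n : Type*} [Fintype n] [Fintype m] [DecidableEq m]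
    (M : Matrix m n ℝ) (N : Matrix n m ℝ) (i : m) (r : n → ℝ) :
    (M.updateRow i r) * N = (M * N).updateRow i (r ᵥ* N) := by
  ext a b
  by_cases h : a = i
  · subst h; simp [Matrix.mul_apply, Matrix.vecMul, dotProduct]
  · simp [Matrix.mul_apply, h]

/-- The matrix `W(x)`. -/
def Wm {d r : ℕ} (p : Fin r → ℕ) (v : ∀ i : Fin r, Fin (p i) → (Fin d → ℝ))
    (x : ∀ i : Fin r, Fin (p i) → ℝ) : Matrix (Fin d) (Fin r) ℝ :=
  Matrix.of fun (a : Fin d) (i : Fin r) => ∑ j, x i j * v i j a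

lemma volFn_eq {d r : ℕ} (p : Fin r → ℕ) (v : ∀ i : Fin r, Fin (p i) → (Fin d → ℝ))
    (x : ∀ i : Fin r, Fin (p i) → ℝ) :
    volFn p v x = Real.sqrt ((Wm p v x)ᵀ * Wm p v x).det := rfl

/-- the linear column map for block `i` -/
def colL {d r : ℕ} (p : Fin r → ℕ) (v : ∀ i : Fin r, Fin (p i) → (Fin d → ℝ))
    (i : Fin r) (y : Fin (p i) → ℝ) : Fin d → ℝ := fun a => ∑ j, y j * v i j a

lemma Wm_update {d r : ℕ} (p : Fin r → ℕ) (v : ∀ i : Fin r, Fin (p i) → (Fin d → ℝ))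
    (x : ∀ i : Fin r, Fin (p i) → ℝ) (i : Fin r) (y : Fin (p i) → ℝ) :
    Wm p v (Function.update x i y) = (Wm p v x).updateCol i (colL p v i y) := by
  ext a i'
  by_cases h : i' = i
  · subst h; simp [Wm, colL, Matrix.updateCol_apply]
  · simp [Wm, Matrix.updateCol_apply, h, Function.update_of_ne h]

/-- The bilinear-in-`(y,z)` determinant. -/
def Dq {d r : ℕ} (p : Fin r → ℕ) (v : ∀ i : Fin r, Fin (p i) → (Fin d → ℝ))
    (x : ∀ i : Fin r, Fin (p i) → ℝ) (i : Fin r) (y z : Fin (p i) → ℝ) : ℝ :=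
  ((Wm p v (Function.update x i y))ᵀ * Wm p v (Function.update x i z)).det

variable {d r : ℕ} (p : Fin r → ℕ) (v : ∀ i : Fin r, Fin (p i) → (Fin d → ℝ))
    (x : ∀ i : Fin r, Fin (p i) → ℝ) (i : Fin r)

lemma Dq_eq (y z : Fin (p i) → ℝ) :
    Dq p v x i y z =
      (((Wm p v x)ᵀ * Wm p v (Function.update x i z)).updateRow i
        (colL p v i y ᵥ* Wm p v (Function.update x i z))).det := by
  rw [Dq, Wm_update p v x i y, ← Matrix.updateRow_transpose, updateRow_mul']

lemma colL_add (y y' : Fin (p i) → ℝ) :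
    colL p v i (y + y') = colL p v i y + colL p v i y' := by
  funext a
  simp [colL, add_mul, Finset.sum_add_distrib]

lemma colL_smul (c : ℝ) (y : Fin (p i) → ℝ) :
    colL p v i (c • y) = c • colL p v i y := by
  funext a
  simp [colL, Finset.mul_sum, mul_assoc]

lemma Dq_add_left (y y' z : Fin (p i) → ℝ) :
    Dq p v x i (y + y') z = Dq p v x i y z + Dq p v x i y' z := by
  rw [Dq_eq, Dq_eq, Dq_eq, colL_add, Matrix.add_vecMul, Matrix.det_updateRow_add]

lemma Dq_smul_left (c : ℝ) (y z : Fin (p i) → ℝ) :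
    Dq p v x i (c • y) z = c * Dq p v x i y z := by
  rw [Dq_eq, Dq_eq, colL_smul, Matrix.smul_vecMul, Matrix.det_updateRow_smul]

lemma Dq_symm (y z : Fin (p i) → ℝ) : Dq p v x i y z = Dq p v x i z y := by
  rw [Dq, Dq, ← Matrix.det_transpose, Matrix.transpose_mul, Matrix.transpose_transpose]

lemma Dq_add_right (y z z' : Fin (p i) → ℝ) :
    Dq p v x i y (z + z') = Dq p v x i y z + Dq p v x i y z' := by
  rw [Dq_symm, Dq_add_left, Dq_symm p v x i z, Dq_symm p v x i z']

lemma Dq_smul_right (c : ℝ) (y z : Fin (p i) → ℝ) :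
    Dq p v x i y (c • z) = c * Dq p v x i y z := by
  rw [Dq_symm, Dq_smul_left, Dq_symm]

lemma Dq_self_nonneg (y : Fin (p i) → ℝ) : 0 ≤ Dq p v x i y y :=
  gram_det_nonneg _

/-- Convexity of `y ↦ Dq y y` on the whole space. -/
lemma convexOn_Dq : ConvexOn ℝ Set.univ (fun y => Dq p v x i y y) := by
  refine ⟨convex_univ, fun a _ b _ s t hs ht hst => ?_⟩
  have expand : Dq p v x i (s • a + t • b) (s • a + t • b)
      = s * (s * Dq p v x i a a) + s * (t * Dq p v x i a b)
        + (t * (s * Dq p v x i b a) + t * (t * Dq p v x i b b)) := by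
    simp only [Dq_add_left, Dq_add_right, Dq_smul_left, Dq_smul_right]
    rw [Dq_symm p v x i b a]
    ring
  have hsym : Dq p v x i a b = Dq p v x i b a := Dq_symm p v x i a b
  have hq : 0 ≤ Dq p v x i a a - Dq p v x i a b - Dq p v x i b a + Dq p v x i b b := by
    have hnn : 0 ≤ Dq p v x i (a - b) (a - b) := Dq_self_nonneg p v x i _
    have h1 : a - b = a + (-1 : ℝ) • b := by simp [sub_eq_add_neg]
    rw [h1, Dq_add_left, Dq_add_right, Dq_add_right, Dq_smul_left, Dq_smul_right,
      Dq_smul_right, Dq_smul_left] at hnn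
    linarith
  simp only [smul_eq_mul]
  have hs1 : s = 1 - t := by linarith
  subst hs1
  rw [expand]
  nlinarith [mul_nonneg hs ht, hq]

end VolAux

open VolAux in
/-- **Roundability of the volume function** (Lemma 4.4): the maximum of `f_V` over the product
of simplices `∏_{i=1}^r Δ_{p_i}` is attained at a vertex, i.e. at a tuple of standard basis
vectors `(e_{j_1}, …, e_{j_r})`. -/
theorem volume_function_max_at_vertex
    (d r : ℕ) (hr : 1 ≤ r) (hdr : r ≤ d)
    (p : Fin r → ℕ) (hp : ∀ i, 0 < p i)
    (v : ∀ i : Fin r, Fin (p i) → (Fin d → ℝ)) :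
    ∃ jsel : ∀ i : Fin r, Fin (p i),
      volFn p v (fun i => Pi.single (jsel i) 1) =
        sSup (volFn p v '' Set.univ.pi fun i => stdSimplex ℝ (Fin (p i))) := by
  classical
  set S : Set (∀ i : Fin r, Fin (p i) → ℝ) :=
    Set.univ.pi fun i => stdSimplex ℝ (Fin (p i)) with hS
  -- compactness and nonemptiness
  have hScomp : IsCompact S := isCompact_univ_pi fun i => isCompact_stdSimplex _ _
  have hSne : S.Nonempty := by
    refine ⟨fun i => Pi.single ⟨0, hp i⟩ 1, ?_⟩
    intro i _
    exact single_mem_stdSimplex ℝ _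
  -- continuity of volFn
  have hent : ∀ (a : Fin d) (i : Fin r),
      Continuous fun (x : ∀ i : Fin r, Fin (p i) → ℝ) => ∑ j, x i j * v i j a := by
    intro a i
    refine continuous_finset_sum _ fun j _ => ?_
    have h1 : Continuous fun (x : ∀ i : Fin r, Fin (p i) → ℝ) => x i j :=
      (continuous_apply j).comp (continuous_apply i)
    exact h1.mul continuous_const
  have hWm : Continuous fun (x : ∀ i : Fin r, Fin (p i) → ℝ) => Wm p v x :=
    continuous_matrix fun a i => hent a i
  have hcont : Continuous (volFn p v) := by
    have : Continuous fun (x : ∀ i : Fin r, Fin (p i) → ℝ) =>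
        ((Wm p v x)ᵀ * Wm p v x).det :=
      Continuous.matrix_det ((hWm.matrix_transpose).matrix_mul hWm)
    exact Real.continuous_sqrt.comp this
  -- key one-block rounding lemma
  have key : ∀ x ∈ S, ∀ i : Fin r, ∃ j : Fin (p i),
      volFn p v x ≤ volFn p v (Function.update x i (Pi.single j 1)) := by
    intro x hx i
    have hxi : x i ∈ stdSimplex ℝ (Fin (p i)) := hx i (Set.mem_univ i)
    have hh := convexHull_basis_eq_stdSimplex (R := ℝ) (Fin (p i))
    rw [← hh] at hxi
    have hconv := convexOn_Dq p v x i
    obtain ⟨e, ⟨j, hj⟩, hle⟩ :=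
      hconv.exists_ge_of_mem_convexHull (Set.subset_univ _) hxi
    refine ⟨j, ?_⟩
    have hsingle : e = Pi.single j 1 := by
      subst hj
      funext k
      rcases eq_or_ne k j with rfl | h
      · simp
      · simp [Pi.single_apply, h, Ne.symm h]
    have h1 : volFn p v x = Real.sqrt (Dq p v x i (x i) (x i)) := by
      rw [Dq, Function.update_eq_self, volFn_eq]
    have h2 : volFn p v (Function.update x i (Pi.single j 1))
        = Real.sqrt (Dq p v x i (Pi.single j 1) (Pi.single j 1)) := by rw [Dq, volFn_eq]
    rw [h1, h2]
    apply Real.sqrt_le_sqrt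
    rw [← hsingle]
    exact hle
  -- maximizer exists
  obtain ⟨x₀, hx₀S, hx₀max⟩ := hScomp.exists_isMaxOn hSne hcont.continuousOn
  -- round the maximizer one block at a time
  have round : ∀ t : Finset (Fin r), ∃ x, x ∈ S ∧ IsMaxOn (volFn p v) S x ∧
      ∀ i ∈ t, ∃ j : Fin (p i), x i = Pi.single j 1 := by
    intro t
    induction t using Finset.induction_on with
    | empty => exact ⟨x₀, hx₀S, hx₀max, by simp⟩
    | @insert i t hit ih =>
      obtain ⟨x, hxS, hxmax, hpure⟩ := ih
      obtain ⟨j, hj⟩ := key x hxS i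
      refine ⟨Function.update x i (Pi.single j 1), ?_, ?_, ?_⟩
      · intro i' _
        by_cases h : i' = i
        · subst h; simp only [Function.update_self]; exact single_mem_stdSimplex ℝ _
        · rw [Function.update_of_ne h]; exact hxS i' (Set.mem_univ i')
      · intro y hy
        exact le_trans (hxmax hy) hj
      · intro i' hi'
        by_cases h : i' = i
        · subst h; exact ⟨j, Function.update_self _ _ _⟩
        · rw [Function.update_of_ne h]
          exact hpure i' (Finset.mem_of_mem_insert_of_ne hi' h)
  obtain ⟨x, hxS, hxmax, hpure⟩ := round Finset.univ
  choose jsel hjsel using fun i => hpure i (Finset.mem_univ i)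
  refine ⟨jsel, ?_⟩
  have hxeq : (fun i => Pi.single (jsel i) 1) = x := by
    funext i; exact (hjsel i).symm
  rw [hxeq]
  symm
  apply IsGreatest.csSup_eq
  constructor
  · exact Set.mem_image_of_mem _ hxS
  · rintro _ ⟨y, hy, rfl⟩
    exact hxmax hy

end
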